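/- Let M : [n] × [n] → ℤ, v : [n] → ℤ, and for ℓ ∈ ℕ define M^(ℓ)[i,k] = ⌊M[i,k]/2^(ℓ+1)⌋ if the ℓ-th bit of M[i,k] is 0 and M^(ℓ)[i,k] = −1 otherwise; and v^(ℓ)[k] = ⌊(v[k]+1)/2^(ℓ+1)⌋ if the ℓ-th bit of v[k]+1 is 1 and v^(ℓ)[k] = −2 otherwise. Assume all entries of M and v are integers in [0, N). Then for every i: (∃ k, M[i,k] ≤ v[k]) if and only if there exist ℓ ≤ ⌈log₂ N⌉ and k with M^(ℓ)[i,k] = v^(ℓ)[k]. -/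

import Mathlib

private lemma nat_key (a c : ℕ) :
    a < c ↔ ∃ ℓ, a / 2 ^ ℓ % 2 = 0 ∧ c / 2 ^ ℓ % 2 = 1 ∧
      a / 2 ^ (ℓ + 1) = c / 2 ^ (ℓ + 1) := by
  constructor
  · intro h
    have hd : a ^^^ c ≠ 0 := by
      intro h0
      have : a = c := xor_eq_zero_iff.mp h0
      omega
    obtain ⟨i, hi, hih⟩ := Nat.exists_most_significant_bit hd
    have hagree : ∀ j, i < j → a.testBit j = c.testBit j := by
      intro j hj
      have := hih j hj
      rw [Nat.testBit_xor] at this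
      cases h1 : a.testBit j <;> cases h2 : c.testBit j <;> simp_all
    have hdiff : a.testBit i ≠ c.testBit i := by
      intro heq
      rw [Nat.testBit_xor, heq] at hi
      simp at hi
    have hac : a.testBit i = false ∧ c.testBit i = true := by
      cases h1 : a.testBit i <;> cases h2 : c.testBit i
      · exact absurd (h1.trans h2.symm) hdiff
      · exact ⟨rfl, rfl⟩
      · exact absurd (Nat.lt_of_testBit i h2 h1 (fun j hj => (hagree j hj).symm))
          (by omega)
      · exact absurd (h1.trans h2.symm) hdiff
    refine ⟨i, ?_, ?_, ?_⟩
    · have := hac.1; simp [Nat.testBit_eq_decide_div_mod_eq] at this; omega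
    · have := hac.2; simpa [Nat.testBit_eq_decide_div_mod_eq] using this
    · rw [← Nat.shiftRight_eq_div_pow, ← Nat.shiftRight_eq_div_pow]
      apply Nat.eq_of_testBit_eq
      intro j
      simp only [Nat.testBit_shiftRight]
      exact hagree (i + 1 + j) (by omega)
  · rintro ⟨ℓ, h0, h1, he⟩
    apply Nat.lt_of_testBit ℓ
    · simp [Nat.testBit_eq_decide_div_mod_eq, h0]
    · simp [Nat.testBit_eq_decide_div_mod_eq, h1]
    · intro j hj
      have ha : a.testBit j = (a >>> (ℓ + 1)).testBit (j - (ℓ + 1)) := by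
        rw [Nat.testBit_shiftRight]; congr 1; omega
      have hc : c.testBit j = (c >>> (ℓ + 1)).testBit (j - (ℓ + 1)) := by
        rw [Nat.testBit_shiftRight]; congr 1; omega
      rw [ha, hc, Nat.shiftRight_eq_div_pow, Nat.shiftRight_eq_div_pow, he]

theorem stmt_9 (n : ℕ) (N : ℕ)
    (M : Fin n → Fin n → ℤ) (v : Fin n → ℤ)
    (hM : ∀ i k, 0 ≤ M i k ∧ M i k < (N : ℤ))
    (hv : ∀ k, 0 ≤ v k ∧ v k < (N : ℤ))
    (Mℓ : ℕ → Fin n → Fin n → ℤ)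
    (hMℓ : ∀ (ℓ : ℕ) (i k : Fin n),
      Mℓ ℓ i k = if (M i k / 2 ^ ℓ) % 2 = 0 then M i k / 2 ^ (ℓ + 1) else -1)
    (vℓ : ℕ → Fin n → ℤ)
    (hvℓ : ∀ (ℓ : ℕ) (k : Fin n),
      vℓ ℓ k = if ((v k + 1) / 2 ^ ℓ) % 2 = 1 then (v k + 1) / 2 ^ (ℓ + 1) else -2) :
    ∀ i : Fin n,
      (∃ k, M i k ≤ v k) ↔ ∃ ℓ ≤ Nat.clog 2 N, ∃ k, Mℓ ℓ i k = vℓ ℓ k := by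
  intro i
  -- cast helpers
  have castdiv : ∀ (x : ℤ) (m : ℕ), 0 ≤ x → x / 2 ^ m = ((x.toNat / 2 ^ m : ℕ) : ℤ) := by
    intro x m hx
    rw [Int.natCast_ediv]
    push_cast [Int.toNat_of_nonneg hx]
    ring_nf
  have castmod : ∀ (x : ℤ) (m r : ℕ), 0 ≤ x →
      ((x / 2 ^ m) % 2 = (r : ℤ) ↔ x.toNat / 2 ^ m % 2 = r) := by
    intro x m r hx
    rw [castdiv x m hx]
    omega
  constructor
  · rintro ⟨k, hk⟩
    set a := (M i k).toNat with ha
    set c := (v k + 1).toNat with hc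
    have hM0 := (hM i k).1
    have hv0 := (hv k).1
    have hlt : a < c := by omega
    obtain ⟨ℓ, h0, h1, he⟩ := (nat_key a c).mp hlt
    have hbound : ℓ ≤ Nat.clog 2 N := by
      have h2ℓ : 2 ^ ℓ ≤ c := by
        have : 1 ≤ c / 2 ^ ℓ := by
          rcases Nat.eq_zero_or_pos (c / 2 ^ ℓ) with h | h
          · rw [h] at h1; simp at h1
          · exact h
        calc 2 ^ ℓ = 2 ^ ℓ * 1 := by ring
        _ ≤ 2 ^ ℓ * (c / 2 ^ ℓ) := by exact Nat.mul_le_mul_left _ this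
        _ ≤ c := Nat.mul_div_le c (2 ^ ℓ)
      have hcN : c ≤ N := by
        have := (hv k).2; omega
      have : (2 : ℕ) ^ ℓ ≤ 2 ^ Nat.clog 2 N :=
        le_trans (le_trans h2ℓ hcN) (Nat.le_pow_clog one_lt_two N)
      exact (Nat.pow_le_pow_iff_right one_lt_two).mp this
    refine ⟨ℓ, hbound, k, ?_⟩
    rw [hMℓ, hvℓ]
    have c0 : ((M i k / 2 ^ ℓ) % 2 : ℤ) = (0 : ℕ) := (castmod _ ℓ 0 hM0).mpr h0
    have c1 : (((v k + 1) / 2 ^ ℓ) % 2 : ℤ) = (1 : ℕ) := (castmod _ ℓ 1 (by omega)).mpr h1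
    rw [if_pos (by exact_mod_cast c0), if_pos (by exact_mod_cast c1)]
    rw [castdiv _ _ hM0, castdiv _ _ (by omega : (0:ℤ) ≤ v k + 1)]
    exact_mod_cast congrArg (Nat.cast : ℕ → ℤ) he
  · rintro ⟨ℓ, hℓ, k, hk⟩
    refine ⟨k, ?_⟩
    rw [hMℓ, hvℓ] at hk
    have hM0 := (hM i k).1
    have hv0 := (hv k).1
    by_cases hA : (M i k / 2 ^ ℓ) % 2 = 0
    · by_cases hB : ((v k + 1) / 2 ^ ℓ) % 2 = 1
      · rw [if_pos hA, if_pos hB] at hk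
        have h0 : (M i k).toNat / 2 ^ ℓ % 2 = 0 := (castmod _ ℓ 0 hM0).mp hA
        have h1 : (v k + 1).toNat / 2 ^ ℓ % 2 = 1 := (castmod _ ℓ 1 (by omega)).mp hB
        have he : (M i k).toNat / 2 ^ (ℓ + 1) = (v k + 1).toNat / 2 ^ (ℓ + 1) := by
          rw [castdiv _ _ hM0, castdiv _ _ (by omega : (0:ℤ) ≤ v k + 1)] at hk
          exact_mod_cast hk
        have := (nat_key _ _).mpr ⟨ℓ, h0, h1, he⟩
        omega
      · rw [if_pos hA, if_neg hB] at hk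
        have : (0:ℤ) ≤ M i k / 2 ^ (ℓ + 1) :=
          Int.ediv_nonneg hM0 (by positivity)
        rw [hk] at this
        norm_num at this
    · rw [if_neg hA] at hk
      by_cases hB : ((v k + 1) / 2 ^ ℓ) % 2 = 1
      · rw [if_pos hB] at hk
        have : (0:ℤ) ≤ (v k + 1) / 2 ^ (ℓ + 1) :=
          Int.ediv_nonneg (by omega) (by positivity)
        rw [← hk] at this
        norm_num at this
      · rw [if_neg hB] at hk; norm_num at hk
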